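/- Let G be a disconnected graph consisting of two connected components H and F, each containing at least one edge, and let G' be obtained from G by adding a single edge between a vertex of H and a vertex of F. Then the connected Grundy number of G' is at least max(Γ_c(H), Γ_c(F)). -/

import Mathlib

open SimpleGraph

/-- First-fit coloring along a vertex sequence: each vertex in turn receives the
smallest positive integer not used on its already-colored neighbors. Uncolored
vertices have color `0`. -/
noncomputable def firstFit {V : Type*} [DecidableEq V] (G : SimpleGraph V) (l : List V) :
    V → ℕ :=
  l.foldl (fun c v => Function.update c v
    (sInf {k | 0 < k ∧ ∀ u, G.Adj v u → c u ≠ k})) (fun _ => 0)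

/-- `l` is an ordering of all vertices. -/
def IsOrdering {V : Type*} (l : List V) : Prop := l.Nodup ∧ ∀ v : V, v ∈ l

/-- `l` is a connected ordering: every vertex after the first has a neighbor earlier. -/
def IsConnectedOrdering {V : Type*} (G : SimpleGraph V) (l : List V) : Prop :=
  IsOrdering l ∧ ∀ i (hi : i < l.length), 0 < i → ∃ u ∈ l.take i, G.Adj u (l.get ⟨i, hi⟩)

/-- Number of colors used by first-fit along `l`. -/
noncomputable def numColors {V : Type*} [Fintype V] [DecidableEq V] (G : SimpleGraph V)
    (l : List V) : ℕ :=
  Finset.univ.sup (firstFit G l)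

/-- The Grundy number: maximum number of first-fit colors over all vertex orderings. -/
noncomputable def grundy {V : Type*} [Fintype V] [DecidableEq V] (G : SimpleGraph V) : ℕ :=
  sSup {k | ∃ l : List V, IsOrdering l ∧ k = numColors G l}

/-- The connected Grundy number: maximum number of first-fit colors over connected orderings. -/
noncomputable def connGrundy {V : Type*} [Fintype V] [DecidableEq V] (G : SimpleGraph V) : ℕ :=
  sSup {k | ∃ l : List V, IsConnectedOrdering G l ∧ k = numColors G l}

/-- The graph obtained from the disjoint union of `H` and `F` by adding the single
edge joining `a : α` to `b : β`. -/
def joinGraph {α β : Type*} (H : SimpleGraph α) (F : SimpleGraph β) (a : α) (b : β) :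
    SimpleGraph (α ⊕ β) :=
  SimpleGraph.fromRel fun p q =>
    match p, q with
    | Sum.inl x, Sum.inl y => H.Adj x y
    | Sum.inr x, Sum.inr y => F.Adj x y
    | Sum.inl x, Sum.inr y => x = a ∧ y = b
    | Sum.inr _, Sum.inl _ => False

section Aux

set_option linter.unusedSectionVars false

/-! ### Auxiliary machinery -/

/-- The first-fit update step. -/
noncomputable def ffStep {V : Type*} [DecidableEq V] (G : SimpleGraph V) (c : V → ℕ) (v : V) :
    V → ℕ :=
  Function.update c v (sInf {k | 0 < k ∧ ∀ u, G.Adj v u → c u ≠ k})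

lemma firstFit_eq_foldl {V : Type*} [DecidableEq V] (G : SimpleGraph V) (l : List V) :
    firstFit G l = l.foldl (ffStep G) (fun _ => 0) := rfl

/-- Connected prefix property. -/
def IsCP {V : Type*} (G : SimpleGraph V) (l : List V) : Prop :=
  l.Nodup ∧ ∀ i (hi : i < l.length), 0 < i → ∃ u ∈ l.take i, G.Adj u (l.get ⟨i, hi⟩)

variable {V : Type*} [DecidableEq V] [Fintype V] {G : SimpleGraph V}

lemma ffStep_sInf_le (G : SimpleGraph V) (c : V → ℕ) (v : V) :
    sInf {k | 0 < k ∧ ∀ u, G.Adj v u → c u ≠ k} ≤ Fintype.card V + 1 := by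
  have hcard : (Finset.image c Finset.univ).card < (Finset.Icc 1 (Fintype.card V + 1)).card := by
    have h1 : (Finset.image c Finset.univ).card ≤ Fintype.card V :=
      le_trans (Finset.card_image_le) (le_of_eq (Finset.card_univ))
    have h2 : (Finset.Icc 1 (Fintype.card V + 1)).card = Fintype.card V + 1 := by
      rw [Nat.card_Icc]; omega
    omega
  obtain ⟨k, hk1, hk2⟩ : ∃ k ∈ Finset.Icc 1 (Fintype.card V + 1),
      k ∉ Finset.image c Finset.univ := by
    by_contra h
    push_neg at h
    exact absurd (Finset.card_le_card h) (not_le.mpr hcard)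
  rw [Finset.mem_Icc] at hk1
  refine le_trans (Nat.sInf_le ?_) hk1.2
  refine ⟨by omega, fun u _ hu => hk2 ?_⟩
  exact Finset.mem_image.mpr ⟨u, Finset.mem_univ u, hu⟩

lemma foldl_ffStep_le (G : SimpleGraph V) :
    ∀ (l : List V) (c : V → ℕ), (∀ v, c v ≤ Fintype.card V + 1) →
      ∀ v, (l.foldl (ffStep G) c) v ≤ Fintype.card V + 1 := by
  intro l
  induction l with
  | nil => intro c hc v; exact hc v
  | cons x l ih =>
    intro c hc v
    refine ih _ (fun w => ?_) v
    by_cases hw : w = x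
    · subst hw
      simp only [ffStep, Function.update_self]
      exact ffStep_sInf_le G c w
    · simpa only [ffStep, Function.update_of_ne hw] using hc w

lemma numColors_le (G : SimpleGraph V) (l : List V) :
    numColors G l ≤ Fintype.card V + 1 := by
  refine Finset.sup_le fun v _ => ?_
  rw [firstFit_eq_foldl]
  exact foldl_ffStep_le G l _ (fun _ => by omega) v

lemma bddAbove_connSet (G : SimpleGraph V) :
    BddAbove {k | ∃ l : List V, IsConnectedOrdering G l ∧ k = numColors G l} := by
  refine ⟨Fintype.card V + 1, fun k hk => ?_⟩
  obtain ⟨l, -, rfl⟩ := hk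
  exact numColors_le G l

lemma exists_crossing {s t : V} (p : G.Walk s t) (l : List V) (hs : s ∈ l) (ht : t ∉ l) :
    ∃ w ∈ l, ∃ u, u ∉ l ∧ G.Adj w u := by
  induction p with
  | nil => exact absurd hs ht
  | @cons x m y hadj q ih =>
    by_cases hm : m ∈ l
    · exact ih hm ht
    · exact ⟨x, hs, m, hm, hadj⟩

lemma extend_cp (hG : G.Connected) :
    ∀ (n : ℕ) (l : List V), l ≠ [] → IsCP G l →
      (Finset.univ \ l.toFinset).card ≤ n →
      ∃ l', l <+: l' ∧ IsConnectedOrdering G l' := by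
  intro n
  induction n with
  | zero =>
    intro l hne hcp hcard
    have hall : ∀ v : V, v ∈ l := by
      intro v
      by_contra hv
      have : v ∈ Finset.univ \ l.toFinset := by
        simp [List.mem_toFinset, hv]
      have := Finset.card_pos.mpr ⟨v, this⟩
      omega
    exact ⟨l, List.prefix_refl l, ⟨⟨hcp.1, hall⟩, hcp.2⟩⟩
  | succ n ih =>
    intro l hne hcp hcard
    by_cases hall : ∀ v : V, v ∈ l
    · exact ⟨l, List.prefix_refl l, ⟨⟨hcp.1, hall⟩, hcp.2⟩⟩
    · push_neg at hall
      obtain ⟨t, ht⟩ := hall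
      have hs : l.head hne ∈ l := List.head_mem hne
      obtain ⟨w, hw, u, hu, hadj⟩ :=
        exists_crossing ((hG.preconnected (l.head hne) t).some) l hs ht
      have hnd : (l ++ [u]).Nodup := by
        simp [List.nodup_append, hcp.1, hu]
        rintro a ha rfl; exact hu ha
      have hcp' : IsCP G (l ++ [u]) := by
        refine ⟨hnd, fun i hi hpos => ?_⟩
        rcases lt_or_eq_of_le (Nat.lt_succ_iff.mp (by simpa using hi)) with hlt | heq
        · obtain ⟨v, hv, hvadj⟩ := hcp.2 i hlt hpos
          refine ⟨v, ?_, ?_⟩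
          · rw [List.take_append_of_le_length (le_of_lt hlt)]; exact hv
          · have : (l ++ [u]).get ⟨i, hi⟩ = l.get ⟨i, hlt⟩ := by
              simp [List.getElem_append, hlt]
            rw [this]; exact hvadj
        · refine ⟨w, ?_, ?_⟩
          · rw [heq, List.take_append_of_le_length (le_refl _), List.take_length]; exact hw
          · have : (l ++ [u]).get ⟨i, hi⟩ = u := List.getElem_concat_length heq hi
            rw [this]; exact hadj
      have hss : Finset.univ \ (l ++ [u]).toFinset ⊂ Finset.univ \ l.toFinset := by
        refine Finset.ssubset_iff_of_subset ?_ |>.mpr ?_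
        · refine Finset.sdiff_subset_sdiff (le_refl _) ?_
          intro v hv
          simp only [List.toFinset_append, Finset.mem_union] at *
          exact Or.inl hv
        · refine ⟨u, ?_, ?_⟩
          · simp [List.mem_toFinset, hu]
          · simp [List.mem_toFinset]
      obtain ⟨l', hpre, hl'⟩ := ih (l ++ [u]) (by simp) hcp'
        (by have := Finset.card_lt_card hss; omega)
      exact ⟨l', (List.prefix_append l [u]).trans hpre, hl'⟩

lemma exists_connOrdering_from (hG : G.Connected) (v0 : V) :
    ∃ l : List V, IsConnectedOrdering G l ∧ l.head? = some v0 := by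
  obtain ⟨l', hpre, hl'⟩ := extend_cp hG (Finset.univ \ [v0].toFinset).card [v0]
    (by simp) ⟨List.nodup_singleton v0, fun i hi hpos => by simp at hi; omega⟩ (le_refl _)
  refine ⟨l', hl', ?_⟩
  obtain ⟨t, ht⟩ := hpre
  rw [← ht]
  simp

variable {α β : Type*} [DecidableEq α] [DecidableEq β]
  {H : SimpleGraph α} {F : SimpleGraph β} {a : α} {b : β}

lemma jg_inl_inl {x y : α} : (joinGraph H F a b).Adj (Sum.inl x) (Sum.inl y) ↔ H.Adj x y := by
  simp only [joinGraph, fromRel_adj, ne_eq, Sum.inl.injEq]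
  constructor
  · rintro ⟨h1, h2 | h2⟩ <;> [exact h2; exact h2.symm]
  · intro h; exact ⟨H.ne_of_adj h, Or.inl h⟩

lemma jg_inr_inr {x y : β} : (joinGraph H F a b).Adj (Sum.inr x) (Sum.inr y) ↔ F.Adj x y := by
  simp only [joinGraph, fromRel_adj, ne_eq, Sum.inr.injEq]
  constructor
  · rintro ⟨h1, h2 | h2⟩ <;> [exact h2; exact h2.symm]
  · intro h; exact ⟨F.ne_of_adj h, Or.inl h⟩

lemma jg_inl_inr {x : α} {y : β} :
    (joinGraph H F a b).Adj (Sum.inl x) (Sum.inr y) ↔ x = a ∧ y = b := by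
  simp only [joinGraph, fromRel_adj, ne_eq]
  constructor
  · rintro ⟨h1, h2 | h2⟩ <;> [exact h2; exact h2.elim]
  · rintro ⟨rfl, rfl⟩; exact ⟨by simp, Or.inl ⟨rfl, rfl⟩⟩

lemma jg_inr_inl {x : β} {y : α} :
    (joinGraph H F a b).Adj (Sum.inr x) (Sum.inl y) ↔ y = a ∧ x = b := by
  simp only [joinGraph, fromRel_adj, ne_eq]
  constructor
  · rintro ⟨h1, h2 | h2⟩ <;> [exact h2.elim; exact h2]
  · rintro ⟨rfl, rfl⟩; exact ⟨by simp, Or.inr ⟨rfl, rfl⟩⟩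

lemma ffStep_inl (c : α → ℕ) (x : α) :
    ffStep (joinGraph H F a b) (Sum.elim c fun _ => 0) (Sum.inl x)
      = Sum.elim (ffStep H c x) (fun _ => 0) := by
  have hset : {k | 0 < k ∧ ∀ u, (joinGraph H F a b).Adj (Sum.inl x) u →
      Sum.elim c (fun _ => 0) u ≠ k} = {k | 0 < k ∧ ∀ u, H.Adj x u → c u ≠ k} := by
    ext k
    constructor
    · rintro ⟨hk, h⟩
      exact ⟨hk, fun u hu => h (Sum.inl u) (jg_inl_inl.mpr hu)⟩
    · rintro ⟨hk, h⟩
      refine ⟨hk, fun u hu => ?_⟩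
      cases u with
      | inl u => exact h u (jg_inl_inl.mp hu)
      | inr u => simpa using hk.ne
  funext p
  cases p with
  | inl y =>
    simp only [ffStep, hset, Function.update_apply, Sum.elim_inl]
    by_cases h : y = x <;> simp [h]
  | inr y =>
    simp only [ffStep]
    rw [Function.update_of_ne (by simp)]
    rfl

lemma ffStep_inr (c : β → ℕ) (x : β) :
    ffStep (joinGraph H F a b) (Sum.elim (fun _ => 0) c) (Sum.inr x)
      = Sum.elim (fun _ => 0) (ffStep F c x) := by
  have hset : {k | 0 < k ∧ ∀ u, (joinGraph H F a b).Adj (Sum.inr x) u →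
      Sum.elim (fun _ => 0) c u ≠ k} = {k | 0 < k ∧ ∀ u, F.Adj x u → c u ≠ k} := by
    ext k
    constructor
    · rintro ⟨hk, h⟩
      exact ⟨hk, fun u hu => h (Sum.inr u) (jg_inr_inr.mpr hu)⟩
    · rintro ⟨hk, h⟩
      refine ⟨hk, fun u hu => ?_⟩
      cases u with
      | inl u => simpa using hk.ne
      | inr u => exact h u (jg_inr_inr.mp hu)
  funext p
  cases p with
  | inl y =>
    simp only [ffStep]
    rw [Function.update_of_ne (by simp)]
    rfl
  | inr y =>
    simp only [ffStep, hset, Function.update_apply, Sum.elim_inr]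
    by_cases h : y = x <;> simp [h]

lemma foldl_map_inl : ∀ (m : List α) (c : α → ℕ),
    (m.map Sum.inl).foldl (ffStep (joinGraph H F a b)) (Sum.elim c fun _ => 0)
      = Sum.elim (m.foldl (ffStep H) c) (fun _ => 0) := by
  intro m
  induction m with
  | nil => intro c; rfl
  | cons x m ih =>
    intro c
    simp only [List.map_cons, List.foldl_cons, ffStep_inl]
    exact ih _

lemma foldl_map_inr : ∀ (m : List β) (c : β → ℕ),
    (m.map Sum.inr).foldl (ffStep (joinGraph H F a b)) (Sum.elim (fun _ => 0) c)
      = Sum.elim (fun _ => 0) (m.foldl (ffStep F) c) := by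
  intro m
  induction m with
  | nil => intro c; rfl
  | cons x m ih =>
    intro c
    simp only [List.map_cons, List.foldl_cons, ffStep_inr]
    exact ih _

lemma foldl_map_inr_apply_inl : ∀ (m : List β) (c : α ⊕ β → ℕ) (x : α),
    ((m.map Sum.inr).foldl (ffStep (joinGraph H F a b)) c) (Sum.inl x) = c (Sum.inl x) := by
  intro m
  induction m with
  | nil => intro c x; rfl
  | cons y m ih =>
    intro c x
    simp only [List.map_cons, List.foldl_cons]
    rw [ih]
    exact Function.update_of_ne (by simp) _ _

lemma foldl_map_inl_apply_inr : ∀ (m : List α) (c : α ⊕ β → ℕ) (x : β),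
    ((m.map Sum.inl).foldl (ffStep (joinGraph H F a b)) c) (Sum.inr x) = c (Sum.inr x) := by
  intro m
  induction m with
  | nil => intro c x; rfl
  | cons y m ih =>
    intro c x
    simp only [List.map_cons, List.foldl_cons]
    rw [ih]
    exact Function.update_of_ne (by simp) _ _

lemma zero_elim : (fun _ => 0 : α ⊕ β → ℕ) = Sum.elim (fun _ => 0) (fun _ => 0) := by
  funext p; cases p <;> rfl

lemma firstFit_append_inl (lH : List α) (lF : List β) (x : α) :
    firstFit (joinGraph H F a b) (lH.map Sum.inl ++ lF.map Sum.inr) (Sum.inl x)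
      = firstFit H lH x := by
  rw [firstFit_eq_foldl, List.foldl_append, zero_elim, foldl_map_inl,
    foldl_map_inr_apply_inl]
  rfl

lemma firstFit_append_inr (lF : List β) (lH : List α) (x : β) :
    firstFit (joinGraph H F a b) (lF.map Sum.inr ++ lH.map Sum.inl) (Sum.inr x)
      = firstFit F lF x := by
  rw [firstFit_eq_foldl, List.foldl_append, zero_elim, foldl_map_inr,
    foldl_map_inl_apply_inr]
  rfl

lemma splice_inl {lH : List α} {lF : List β}
    (hlH : IsConnectedOrdering H lH) (hlF : IsConnectedOrdering F lF)
    (hb : lF.head? = some b) :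
    IsConnectedOrdering (joinGraph H F a b) (lH.map Sum.inl ++ lF.map Sum.inr) := by
  obtain ⟨lFt, rfl⟩ : ∃ t, lF = b :: t := by
    cases lF with
    | nil => simp at hb
    | cons c t =>
      simp only [List.head?_cons, Option.some.injEq] at hb
      exact ⟨t, by rw [hb]⟩
  refine ⟨⟨?_, ?_⟩, ?_⟩
  · refine List.Nodup.append ?_ ?_ ?_
    · exact hlH.1.1.map Sum.inl_injective
    · exact hlF.1.1.map Sum.inr_injective
    · intro p hp hq
      obtain ⟨x, -, rfl⟩ := List.mem_map.mp hp
      obtain ⟨y, -, h⟩ := List.mem_map.mp hq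
      exact Sum.inl_ne_inr h.symm
  · intro v
    cases v with
    | inl x => exact List.mem_append_left _ (List.mem_map_of_mem (hlH.1.2 x))
    | inr y => exact List.mem_append_right _ (List.mem_map_of_mem (hlF.1.2 y))
  · intro i hi hpos
    have hL : (lH.map Sum.inl : List (α ⊕ β)).length = lH.length := List.length_map _
    by_cases h1 : i < lH.length
    · obtain ⟨u, hu, hadj⟩ := hlH.2 i h1 hpos
      refine ⟨Sum.inl u, ?_, ?_⟩
      · rw [List.take_append_of_le_length (by omega), ← List.map_take]
        exact List.mem_map_of_mem hu
      · have hget : ((lH.map Sum.inl ++ (b :: lFt).map Sum.inr : List (α ⊕ β))).get ⟨i, hi⟩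
            = Sum.inl (lH.get ⟨i, h1⟩) := by
          simp [List.getElem_append, h1]
        rw [hget]
        exact jg_inl_inl.mpr hadj
    · have hlen : i < lH.length + (lFt.length + 1) := by simpa using hi
      by_cases h2 : i = lH.length
      · refine ⟨Sum.inl a, ?_, ?_⟩
        · rw [h2, ← hL, List.take_left]
          exact List.mem_map_of_mem (hlH.1.2 a)
        · have hget : ((lH.map Sum.inl ++ (b :: lFt).map Sum.inr : List (α ⊕ β))).get ⟨i, hi⟩
              = Sum.inr b := by
            simp [List.getElem_append, h1, h2]
          rw [hget]
          exact jg_inl_inr.mpr ⟨rfl, rfl⟩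
      · have hj : 0 < i - lH.length := by omega
        have hjlt : i - lH.length < (b :: lFt).length := by simp; omega
        obtain ⟨u, hu, hadj⟩ := hlF.2 (i - lH.length) hjlt hj
        refine ⟨Sum.inr u, ?_, ?_⟩
        · rw [List.take_append]
          refine List.mem_append_right _ ?_
          rw [hL, ← List.map_take]
          exact List.mem_map_of_mem hu
        · have hget : ((lH.map Sum.inl ++ (b :: lFt).map Sum.inr : List (α ⊕ β))).get ⟨i, hi⟩
              = Sum.inr ((b :: lFt).get ⟨i - lH.length, hjlt⟩) := by
            simp only [List.get_eq_getElem, List.getElem_append, List.length_map, h1, dif_neg,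
              not_false_iff, ← List.map_cons, List.getElem_map]
          rw [hget]
          exact jg_inr_inr.mpr hadj

lemma splice_inr {lH : List α} {lF : List β}
    (hlF : IsConnectedOrdering F lF) (hlH : IsConnectedOrdering H lH)
    (ha : lH.head? = some a) :
    IsConnectedOrdering (joinGraph H F a b) (lF.map Sum.inr ++ lH.map Sum.inl) := by
  obtain ⟨lHt, rfl⟩ : ∃ t, lH = a :: t := by
    cases lH with
    | nil => simp at ha
    | cons c t =>
      simp only [List.head?_cons, Option.some.injEq] at ha
      exact ⟨t, by rw [ha]⟩
  refine ⟨⟨?_, ?_⟩, ?_⟩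
  · refine List.Nodup.append ?_ ?_ ?_
    · exact hlF.1.1.map Sum.inr_injective
    · exact hlH.1.1.map Sum.inl_injective
    · intro p hp hq
      obtain ⟨x, -, rfl⟩ := List.mem_map.mp hp
      obtain ⟨y, -, h⟩ := List.mem_map.mp hq
      exact Sum.inr_ne_inl h.symm
  · intro v
    cases v with
    | inl x => exact List.mem_append_right _ (List.mem_map_of_mem (hlH.1.2 x))
    | inr y => exact List.mem_append_left _ (List.mem_map_of_mem (hlF.1.2 y))
  · intro i hi hpos
    have hL : (lF.map Sum.inr : List (α ⊕ β)).length = lF.length := List.length_map _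
    by_cases h1 : i < lF.length
    · obtain ⟨u, hu, hadj⟩ := hlF.2 i h1 hpos
      refine ⟨Sum.inr u, ?_, ?_⟩
      · rw [List.take_append_of_le_length (by omega), ← List.map_take]
        exact List.mem_map_of_mem hu
      · have hget : ((lF.map Sum.inr ++ (a :: lHt).map Sum.inl : List (α ⊕ β))).get ⟨i, hi⟩
            = Sum.inr (lF.get ⟨i, h1⟩) := by
          simp [List.getElem_append, h1]
        rw [hget]
        exact jg_inr_inr.mpr hadj
    · have hlen : i < lF.length + (lHt.length + 1) := by simpa using hi
      by_cases h2 : i = lF.length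
      · refine ⟨Sum.inr b, ?_, ?_⟩
        · rw [h2, ← hL, List.take_left]
          exact List.mem_map_of_mem (hlF.1.2 b)
        · have hget : ((lF.map Sum.inr ++ (a :: lHt).map Sum.inl : List (α ⊕ β))).get ⟨i, hi⟩
              = Sum.inl a := by
            simp [List.getElem_append, h1, h2]
          rw [hget]
          exact jg_inr_inl.mpr ⟨rfl, rfl⟩
      · have hj : 0 < i - lF.length := by omega
        have hjlt : i - lF.length < (a :: lHt).length := by simp; omega
        obtain ⟨u, hu, hadj⟩ := hlH.2 (i - lF.length) hjlt hj
        refine ⟨Sum.inl u, ?_, ?_⟩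
        · rw [List.take_append]
          refine List.mem_append_right _ ?_
          rw [hL, ← List.map_take]
          exact List.mem_map_of_mem hu
        · have hget : ((lF.map Sum.inr ++ (a :: lHt).map Sum.inl : List (α ⊕ β))).get ⟨i, hi⟩
              = Sum.inl ((a :: lHt).get ⟨i - lF.length, hjlt⟩) := by
            simp only [List.get_eq_getElem, List.getElem_append, List.length_map, h1, dif_neg,
              not_false_iff, ← List.map_cons, List.getElem_map]
          rw [hget]
          exact jg_inl_inl.mpr hadj

end Aux

theorem stmt18 {α β : Type*} [Fintype α] [Fintype β] [DecidableEq α] [DecidableEq β]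
    (H : SimpleGraph α) (F : SimpleGraph β) (hH : H.Connected) (hF : F.Connected)
    (heH : ∃ x y : α, H.Adj x y) (heF : ∃ x y : β, F.Adj x y) (a : α) (b : β) :
    max (connGrundy H) (connGrundy F) ≤ connGrundy (joinGraph H F a b) := by
  obtain ⟨x0, y0, -⟩ := heH
  obtain ⟨z0, w0, -⟩ := heF
  have hbddG := bddAbove_connSet (joinGraph H F a b)
  refine max_le ?_ ?_
  · -- H side
    have hne : {k | ∃ l : List α, IsConnectedOrdering H l ∧ k = numColors H l}.Nonempty := by
      obtain ⟨l, hl, -⟩ := exists_connOrdering_from hH x0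
      exact ⟨numColors H l, l, hl, rfl⟩
    have hmem := Nat.sSup_mem hne (bddAbove_connSet H)
    obtain ⟨lH, hlH, heq⟩ := hmem
    obtain ⟨lF, hlF, hb⟩ := exists_connOrdering_from hF b
    have hconn := splice_inl (a := a) hlH hlF hb
    have hle : numColors H lH ≤ numColors (joinGraph H F a b) (lH.map Sum.inl ++ lF.map Sum.inr) := by
      refine Finset.sup_le fun x _ => ?_
      rw [← firstFit_append_inl (F := F) (a := a) (b := b) lH lF x]
      exact Finset.le_sup (Finset.mem_univ (Sum.inl x))
    calc connGrundy H = numColors H lH := heq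
      _ ≤ numColors (joinGraph H F a b) (lH.map Sum.inl ++ lF.map Sum.inr) := hle
      _ ≤ connGrundy (joinGraph H F a b) :=
          le_csSup hbddG ⟨lH.map Sum.inl ++ lF.map Sum.inr, hconn, rfl⟩
  · -- F side
    have hne : {k | ∃ l : List β, IsConnectedOrdering F l ∧ k = numColors F l}.Nonempty := by
      obtain ⟨l, hl, -⟩ := exists_connOrdering_from hF z0
      exact ⟨numColors F l, l, hl, rfl⟩
    have hmem := Nat.sSup_mem hne (bddAbove_connSet F)
    obtain ⟨lF, hlF, heq⟩ := hmem
    obtain ⟨lH, hlH, ha⟩ := exists_connOrdering_from hH a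
    have hconn := splice_inr (b := b) hlF hlH ha
    have hle : numColors F lF ≤ numColors (joinGraph H F a b) (lF.map Sum.inr ++ lH.map Sum.inl) := by
      refine Finset.sup_le fun x _ => ?_
      rw [← firstFit_append_inr (H := H) (a := a) (b := b) lF lH x]
      exact Finset.le_sup (Finset.mem_univ (Sum.inr x))
    calc connGrundy F = numColors F lF := heq
      _ ≤ numColors (joinGraph H F a b) (lF.map Sum.inr ++ lH.map Sum.inl) := hle
      _ ≤ connGrundy (joinGraph H F a b) :=
          le_csSup hbddG ⟨lF.map Sum.inr ++ lH.map Sum.inl, hconn, rfl⟩
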